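/- Let N be an admissible algebra with nil-index ν and Hilbert function H(k) = dim(N^k/N^{k+1}). Then H(ν−1) ≤ H(1); more generally dim(N^k/N^ν) ≤ dim(N/N^{ν−k+1}) for all k with ν/2 < k < ν. -/

import Mathlib

/-- `pw F N k` is the characteristic ideal `N^k`. -/
def pw (F N : Type*) [Field F] [NonUnitalNonAssocRing N] [Module F N] : ℕ → Submodule F N
  | 0 => ⊤
  | 1 => ⊤
  | (k+2) => Submodule.span F {z : N | ∃ x : N, ∃ y ∈ pw F N (k+1), z = x * y}

open Module Submodule

section aux
variable (F N : Type*) [Field F] [NonUnitalCommRing N] [Module F N]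
  [SMulCommClass F N N] [IsScalarTower F N N]

lemma mul_mem_pw (x : N) {y : N} {m : ℕ} (hy : y ∈ pw F N (m+1)) :
    x * y ∈ pw F N (m+2) := by
  show x * y ∈ Submodule.span F {z : N | ∃ x : N, ∃ y ∈ pw F N (m+1), z = x * y}
  exact Submodule.subset_span ⟨x, y, hy, rfl⟩

lemma pw_succ_le : ∀ k : ℕ, pw F N (k+1) ≤ pw F N k
  | 0 => le_top
  | 1 => le_top
  | (k+2) => by
      show Submodule.span F {z : N | ∃ x : N, ∃ y ∈ pw F N (k+2), z = x * y} ≤ pw F N (k+2)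
      refine Submodule.span_le.2 ?_
      rintro z ⟨x, y, hy, rfl⟩
      exact mul_mem_pw F N x (pw_succ_le (k+1) hy)

lemma pw_mono {j m : ℕ} (h : j ≤ m) : pw F N m ≤ pw F N j := by
  induction h with
  | refl => exact le_rfl
  | step h ih => exact le_trans (pw_succ_le F N _) ih

lemma pw_mul_mem : ∀ (j : ℕ) {m : ℕ} {x y : N}, x ∈ pw F N (j+1) → y ∈ pw F N (m+1) →
    x * y ∈ pw F N (j+m+2)
  | 0, m, x, y, _, hy => by
      have e : (0:ℕ)+m+2 = m+2 := by omega
      rw [e]; exact mul_mem_pw F N x hy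
  | (j+1), m, x, y, hx, hy => by
      have e : j+1+m+2 = (j+m+1)+2 := by omega
      rw [e]
      have hx' : x ∈ Submodule.span F {z : N | ∃ u : N, ∃ v ∈ pw F N (j+1), z = u * v} := hx
      clear hx
      induction hx' using Submodule.span_induction with
      | mem z hz =>
          obtain ⟨u, v, hv, rfl⟩ := hz
          have h1 : v * y ∈ pw F N ((j+m+1)+1) := pw_mul_mem j hv hy
          rw [mul_assoc]
          exact mul_mem_pw F N u h1
      | zero => simpa using Submodule.zero_mem _
      | add a b _ _ ha hb => simpa [add_mul] using Submodule.add_mem _ ha hb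
      | smul c a _ ha => simpa [smul_mul_assoc] using Submodule.smul_mem _ c ha

end aux

/-- The annihilator `Ann(N) = {x | x·N = 0}` of a commutative algebra `N`. -/
def annSub (F N : Type*) [Field F] [NonUnitalCommRing N] [Module F N]
    [SMulCommClass F N N] [IsScalarTower F N N] : Submodule F N where
  carrier := {x | ∀ y : N, x * y = 0}
  add_mem' := by intro a b ha hb y; simp [add_mul, ha y, hb y]
  zero_mem' := by intro y; simp
  smul_mem' := by intro c x hx y; rw [smul_mul_assoc, hx y, smul_zero]

/-- `qdim F S T = dim (S / (S ∩ T))`, the dimension of the quotient of the submodule `S`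
by (the pullback of) the submodule `T`. -/
noncomputable def qdim (F : Type*) {N : Type*} [Field F] [AddCommGroup N] [Module F N]
    (S T : Submodule F N) : ℕ :=
  Module.finrank F (↥S ⧸ Submodule.comap S.subtype T)

lemma mem_annSub {F N : Type*} [Field F] [NonUnitalCommRing N] [Module F N]
    [SMulCommClass F N N] [IsScalarTower F N N] {x : N} :
    x ∈ annSub F N ↔ ∀ y : N, x * y = 0 := Iff.rfl


lemma key {F N : Type*} [Field F] [NonUnitalCommRing N] [Module F N]
    [SMulCommClass F N N] [IsScalarTower F N N] [FiniteDimensional F N]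
    (hAnn : Module.finrank F (annSub F N) = 1)
    (ν : ℕ) (hnil : pw F N (ν + 1) = ⊥) (hne : pw F N ν ≠ ⊥)
    (k : ℕ) (hk1 : 1 ≤ k) (hk2 : k ≤ ν) :
    qdim F (pw F N k) (pw F N ν) ≤ qdim F (pw F N 1) (pw F N (ν - k + 1)) := by
  have hν1 : 1 ≤ ν := le_trans hk1 hk2
  -- N^ν ⊆ Ann
  have hsub : pw F N ν ≤ annSub F N := by
    intro z hz
    rw [mem_annSub]
    intro y
    have e : ν = (ν-1)+1 := by omega
    rw [e] at hz
    have h1 : y * z ∈ pw F N ((ν-1)+2) := mul_mem_pw F N y hz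
    have e2 : (ν-1)+2 = ν+1 := by omega
    rw [e2, hnil, Submodule.mem_bot] at h1
    rw [mul_comm]; exact h1
  -- N^ν = Ann
  have heq : pw F N ν = annSub F N := by
    obtain ⟨b, hb, hb0⟩ := Submodule.exists_mem_ne_zero_of_ne_bot hne
    refine Submodule.eq_of_le_of_finrank_le hsub ?_
    rw [hAnn]
    have h1 : Module.finrank F (Submodule.span F {b}) = 1 := finrank_span_singleton hb0
    calc (1:ℕ) = Module.finrank F (Submodule.span F {b}) := h1.symm
      _ ≤ Module.finrank F (pw F N ν) :=
        Submodule.finrank_mono ((Submodule.span_le).2 (Set.singleton_subset_iff.2 hb))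
  -- a nonzero annihilator element and a functional π with π a ≠ 0
  have hA0 : annSub F N ≠ ⊥ := by
    intro h; rw [h, finrank_bot] at hAnn; simp at hAnn
  obtain ⟨a, haA, ha0⟩ := Submodule.exists_mem_ne_zero_of_ne_bot hA0
  have hπ : ¬ ∀ φ : Module.Dual F N, φ a = 0 := by
    rw [Module.forall_dual_apply_eq_zero_iff]; exact ha0
  push_neg at hπ
  obtain ⟨π, hπa⟩ := hπ
  -- π is nonzero on every nonzero annihilator element
  have πAnn : ∀ z : N, z ∈ annSub F N → z ≠ 0 → π z ≠ 0 := by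
    intro z hzA hz0
    have hspan : Submodule.span F {z} = annSub F N :=
      Submodule.eq_of_le_of_finrank_le
        ((Submodule.span_le).2 (Set.singleton_subset_iff.2 hzA))
        (by rw [hAnn, finrank_span_singleton hz0])
    have hmem : a ∈ Submodule.span F {z} := by rw [hspan]; exact haA
    obtain ⟨c, rfl⟩ := Submodule.mem_span_singleton.1 hmem
    intro h
    apply hπa
    simp [h]
  -- nondegeneracy of the form π(xy) modulo the annihilator
  have nondeg : ∀ x : N, (∀ y : N, π (x * y) = 0) → x ∈ annSub F N := by
    intro x hx
    by_contra hxA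
    have hex : ∃ y : N, x * y ≠ 0 := by
      by_contra h; push_neg at h; exact hxA (mem_annSub.2 h)
    have H : ∀ d : ℕ, ∀ z : N, z ∈ pw F N (ν + 1 - d) → (∃ y : N, z = x * y) → z = 0 := by
      intro d
      induction d with
      | zero =>
        intro z hz _
        rw [Nat.sub_zero, hnil, Submodule.mem_bot] at hz
        exact hz
      | succ d ih =>
        intro z hz hzy
        by_contra hz0
        by_cases hzA : z ∈ annSub F N
        · obtain ⟨y, rfl⟩ := hzy
          exact πAnn _ hzA hz0 (hx y)
        · have hw : ∃ w : N, z * w ≠ 0 := by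
            by_contra h; push_neg at h; exact hzA (mem_annSub.2 h)
          obtain ⟨w, hw⟩ := hw
          apply hw
          refine ih (z * w) ?_ ?_
          · rcases Nat.lt_or_ge d ν with hd | hd
            · have h1 : ν + 1 - (d+1) = (ν - d - 1) + 1 := by omega
              have h2 : ν + 1 - d = (ν - d - 1) + 2 := by omega
              rw [h1] at hz
              rw [h2, mul_comm]
              exact mul_mem_pw F N w hz
            · have : ν + 1 - d = 1 ∨ ν + 1 - d = 0 := by omega
              rcases this with h | h <;> rw [h] <;> exact Submodule.mem_top
          · obtain ⟨y, rfl⟩ := hzy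
            exact ⟨y * w, mul_assoc x y w⟩
    obtain ⟨y₀, hy₀⟩ := hex
    apply hy₀
    refine H (ν+1) (x*y₀) ?_ ⟨y₀, rfl⟩
    have e : ν + 1 - (ν+1) = 0 := by omega
    rw [e]
    exact Submodule.mem_top
  -- the bilinear form
  set T := pw F N (ν - k + 1) with hT
  let β : N →ₗ[F] N →ₗ[F] F := (LinearMap.mul F N).compr₂ π
  have hβ : ∀ x y : N, β x y = π (x * y) := fun x y => rfl
  have hker0 : ∀ x : ↥(pw F N k), ∀ y ∈ T, (x : N) * y = 0 := by
    intro x y hy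
    have hx : (x : N) ∈ pw F N ((k-1)+1) := by
      have e : k = (k-1)+1 := by omega
      rw [← e]; exact x.2
    have h1 : (x : N) * y ∈ pw F N ((k-1)+(ν-k)+2) := pw_mul_mem F N (k-1) hx hy
    have e : (k-1)+(ν-k)+2 = ν+1 := by omega
    rw [e, hnil, Submodule.mem_bot] at h1
    exact h1
  have hcond : ∀ x : ↥(pw F N k), T ≤ LinearMap.ker (β (x : N)) := by
    intro x y hy
    rw [LinearMap.mem_ker, hβ, hker0 x y hy, map_zero]
  let Φ : ↥(pw F N k) →ₗ[F] Module.Dual F (N ⧸ T) :=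
    { toFun := fun x => T.liftQ (β (x : N)) (hcond x)
      map_add' := by
        intro x y
        apply Submodule.linearMap_qext
        ext z
        simp
      map_smul' := by
        intro c x
        apply Submodule.linearMap_qext
        ext z
        simp }
  have hΦapp : ∀ (x : ↥(pw F N k)) (y : N), Φ x (Submodule.Quotient.mk y) = π ((x : N) * y) :=
    fun x y => rfl
  have hkerΦ : LinearMap.ker Φ = Submodule.comap (pw F N k).subtype (pw F N ν) := by
    ext x
    rw [LinearMap.mem_ker, Submodule.mem_comap, Submodule.subtype_apply]
    constructor
    · intro h
      rw [heq]
      apply nondeg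
      intro y
      rw [← hΦapp x y, h]
      rfl
    · intro h
      apply Submodule.linearMap_qext
      ext y
      have hz : (x : N) * y = 0 := by
        rw [heq] at h
        exact h y
      simp only [LinearMap.comp_apply, Submodule.mkQ_apply, LinearMap.zero_apply]
      rw [hΦapp x y, hz, map_zero]
  have e1 : qdim F (pw F N k) (pw F N ν) = Module.finrank F ↥(LinearMap.range Φ) := by
    rw [qdim, ← hkerΦ]
    exact LinearEquiv.finrank_eq (LinearMap.quotKerEquivRange Φ)
  have e2 : Module.finrank F ↥(LinearMap.range Φ) ≤ Module.finrank F (Module.Dual F (N ⧸ T)) :=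
    Submodule.finrank_le _
  have e3 : Module.finrank F (Module.Dual F (N ⧸ T)) = Module.finrank F (N ⧸ T) :=
    Subspace.dual_finrank_eq
  have e4 : qdim F (pw F N 1) T = Module.finrank F (N ⧸ T) := by
    rw [qdim]
    refine LinearEquiv.finrank_eq (Submodule.Quotient.equiv _ _ (Submodule.topEquiv) ?_)
    ext z
    simp only [Submodule.mem_map, Submodule.mem_comap]
    constructor
    · rintro ⟨w, hw, rfl⟩
      exact hw
    · intro hz
      exact ⟨⟨z, trivial⟩, hz, rfl⟩
  rw [e1, e4]
  exact e3 ▸ e2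


/-- For an admissible algebra `N` with nil-index `ν` and Hilbert function
`H(k) = dim(N^k/N^{k+1})` one has `dim(N^k/N^ν) ≤ dim(N/N^{ν−k+1})` for all `ν/2 < k < ν`;
in particular `H(ν−1) ≤ H(1)`. -/
theorem stmt17 {F N : Type*} [Field F] [CharZero F] [NonUnitalCommRing N] [Module F N]
    [SMulCommClass F N N] [IsScalarTower F N N] [FiniteDimensional F N]
    (hAnn : Module.finrank F (annSub F N) = 1)
    (ν : ℕ) (hnil : pw F N (ν + 1) = ⊥) (hne : pw F N ν ≠ ⊥) :
    (∀ k : ℕ, ν < 2 * k → k < ν →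
        qdim F (pw F N k) (pw F N ν) ≤ qdim F (pw F N 1) (pw F N (ν - k + 1))) ∧
      qdim F (pw F N (ν - 1)) (pw F N ν) ≤ qdim F (pw F N 1) (pw F N 2) := by
  constructor
  · intro k h2k hkν
    exact key hAnn ν hnil hne k (by omega) (le_of_lt hkν)
  · rcases Nat.lt_or_ge ν 2 with hν | hν
    · interval_cases ν
      · exact absurd hnil hne
      · have h0 : qdim F (pw F N 0) (pw F N 1) = 0 := by
          rw [qdim]
          have hc : Submodule.comap (pw F N (0:ℕ)).subtype (pw F N 1) = ⊤ :=
            Submodule.comap_top _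
          rw [hc]
          haveI : Subsingleton (↥(pw F N (0:ℕ)) ⧸ (⊤ : Submodule F ↥(pw F N (0:ℕ)))) :=
            Submodule.Quotient.subsingleton_iff.2 rfl
          exact Module.finrank_zero_of_subsingleton
        have e : (1:ℕ) - 1 = 0 := rfl
        rw [e, h0]
        exact Nat.zero_le _
    · have h := key hAnn ν hnil hne (ν-1) (by omega) (by omega)
      have e : ν - (ν-1) + 1 = 2 := by omega
      rwa [e] at h
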